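/- Let W = (𝒫, n) be a well-defined Wilson loop diagram. Then there exists a matroid M on the ground set Fin n whose independent sets are exactly the sets S ⊆ Fin n such that |U| ≤ |Prop(U)| for every U ⊆ S; moreover the bases of this matroid are exactly the sets B ⊆ Fin n with |B| = |𝒫| and |U| ≤ |Prop(U)| for every U ⊆ B (in particular the matroid has rank |𝒫|). -/

import Mathlib

open Matroid Set

/-- The support of a propagator: its two endpoints and their cyclic successors. -/
def Vp (n : ℕ) [NeZero n] (p : Fin n × Fin n) : Set (Fin n) :=
  {p.1, p.1 + 1, p.2, p.2 + 1}

/-- The support of a set of propagators. -/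
def VP (n : ℕ) [NeZero n] (P : Set (Fin n × Fin n)) : Set (Fin n) :=
  ⋃ p ∈ P, Vp n p

/-- `propsOf n Ps S` is `Prop(S)`: the propagators of `Ps` whose support meets `S`. -/
def propsOf (n : ℕ) [NeZero n] (Ps : Set (Fin n × Fin n)) (S : Set (Fin n)) :
    Set (Fin n × Fin n) :=
  {p ∈ Ps | (Vp n p ∩ S).Nonempty}

/-- A Wilson loop diagram `(Ps, n)` is well defined if `|V_P| ≥ |P| + 3`
for every nonempty `P ⊆ Ps`. -/
def WellDefinedWLD (n : ℕ) [NeZero n] (Ps : Set (Fin n × Fin n)) : Prop :=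
  ∀ P ⊆ Ps, P.Nonempty → P.ncard + 3 ≤ (VP n P).ncard

section Aux

variable (n : ℕ) [NeZero n] (Ps : Set (Fin n × Fin n))

lemma WLD.propsOf_subset (S : Set (Fin n)) : propsOf n Ps S ⊆ Ps := fun _ h => h.1

lemma WLD.propsOf_mono {S T : Set (Fin n)} (h : S ⊆ T) :
    propsOf n Ps S ⊆ propsOf n Ps T :=
  fun p hp => ⟨hp.1, hp.2.mono (inter_subset_inter_right _ h)⟩

lemma WLD.propsOf_empty : propsOf n Ps (∅ : Set (Fin n)) = ∅ := by
  ext p; simp [propsOf]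

lemma WLD.propsOf_union (S T : Set (Fin n)) :
    propsOf n Ps (S ∪ T) = propsOf n Ps S ∪ propsOf n Ps T := by
  ext p
  simp only [propsOf, mem_setOf_eq, mem_union]
  constructor
  · rintro ⟨hp, x, hx, (h | h)⟩
    · exact Or.inl ⟨hp, x, hx, h⟩
    · exact Or.inr ⟨hp, x, hx, h⟩
  · rintro (⟨hp, x, hx, h⟩ | ⟨hp, x, hx, h⟩)
    · exact ⟨hp, x, hx, Or.inl h⟩
    · exact ⟨hp, x, hx, Or.inr h⟩

lemma WLD.propsOf_inter_subset (S T : Set (Fin n)) :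
    propsOf n Ps (S ∩ T) ⊆ propsOf n Ps S ∩ propsOf n Ps T :=
  subset_inter (WLD.propsOf_mono n Ps inter_subset_left)
    (WLD.propsOf_mono n Ps inter_subset_right)

lemma WLD.ncard_mono {S T : Set (Fin n)} (h : S ⊆ T) :
    (propsOf n Ps S).ncard ≤ (propsOf n Ps T).ncard :=
  Set.ncard_le_ncard (WLD.propsOf_mono n Ps h) (Set.toFinite _)

/-- Submodularity of `S ↦ |propsOf S|`. -/
lemma WLD.submod (S T : Set (Fin n)) :
    (propsOf n Ps (S ∪ T)).ncard + (propsOf n Ps (S ∩ T)).ncard ≤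
      (propsOf n Ps S).ncard + (propsOf n Ps T).ncard := by
  rw [WLD.propsOf_union]
  have h1 : (propsOf n Ps (S ∩ T)).ncard ≤
      (propsOf n Ps S ∩ propsOf n Ps T).ncard :=
    Set.ncard_le_ncard (WLD.propsOf_inter_subset n Ps S T) (Set.toFinite _)
  have h2 := Set.ncard_union_add_ncard_inter (propsOf n Ps S) (propsOf n Ps T)
    (Set.toFinite _) (Set.toFinite _)
  omega

/-- The Hall-type independence predicate. -/
def WLD.Ind (S : Set (Fin n)) : Prop :=
  ∀ U ⊆ S, U.ncard ≤ (propsOf n Ps U).ncard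

lemma WLD.ind_empty : WLD.Ind n Ps ∅ := by
  intro U hU
  rw [subset_empty_iff] at hU
  simp [hU]

lemma WLD.ind_subset {S T : Set (Fin n)} (hT : WLD.Ind n Ps T) (h : S ⊆ T) :
    WLD.Ind n Ps S := fun U hU => hT U (hU.trans h)

/-- The union of two tight subsets of an independent set is tight. -/
lemma WLD.tight_union {I A B : Set (Fin n)} (hI : WLD.Ind n Ps I)
    (hA : A ⊆ I) (hB : B ⊆ I)
    (htA : (propsOf n Ps A).ncard = A.ncard) (htB : (propsOf n Ps B).ncard = B.ncard) :
    (propsOf n Ps (A ∪ B)).ncard = (A ∪ B).ncard := by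
  have h1 := WLD.submod n Ps A B
  have h2 := Set.ncard_union_add_ncard_inter A B (Set.toFinite _) (Set.toFinite _)
  have h3 : (A ∪ B).ncard ≤ (propsOf n Ps (A ∪ B)).ncard :=
    hI _ (union_subset hA hB)
  have h4 : (A ∩ B).ncard ≤ (propsOf n Ps (A ∩ B)).ncard :=
    hI _ (inter_subset_left.trans hA)
  omega

/-- If adding `e` to `A` does not increase `|propsOf|`, the same holds for any `B ⊇ A`. -/
lemma WLD.add_elem {A B : Set (Fin n)} {e : Fin n} (hAB : A ⊆ B)
    (h : (propsOf n Ps (insert e A)).ncard ≤ (propsOf n Ps A).ncard) :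
    (propsOf n Ps (insert e B)).ncard ≤ (propsOf n Ps B).ncard := by
  have h1 := WLD.submod n Ps B (insert e A)
  have h2 : B ∪ insert e A = insert e B := by
    rw [union_insert, union_eq_self_of_subset_right hAB]
  have h3 : A ⊆ B ∩ insert e A := subset_inter hAB (subset_insert _ _)
  have h4 := WLD.ncard_mono n Ps h3
  rw [h2] at h1
  omega

/-- The key augmentation property. -/
lemma WLD.ind_aug {I J : Set (Fin n)} (hI : WLD.Ind n Ps I) (hJ : WLD.Ind n Ps J)
    (hlt : I.ncard < J.ncard) :
    ∃ e ∈ J, e ∉ I ∧ WLD.Ind n Ps (insert e I) := by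
  by_contra hcon
  push_neg at hcon
  -- For each `e ∈ J \ I`, produce a tight set `U e ⊆ I` with
  -- `|propsOf (insert e (U e))| ≤ |propsOf (U e)|`.
  have hU : ∀ e : Fin n, ∃ U : Set (Fin n), U ⊆ I ∧
      (propsOf n Ps U).ncard = U.ncard ∧
      (e ∈ J \ I → (propsOf n Ps (insert e U)).ncard ≤ (propsOf n Ps U).ncard) := by
    intro e
    by_cases he : e ∈ J \ I
    · have hni := hcon e he.1 he.2
      unfold WLD.Ind at hni
      push_neg at hni
      obtain ⟨U, hUsub, hUlt⟩ := hni
      have heU : e ∈ U := by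
        by_contra heU
        have hUI : U ⊆ I := fun x hx =>
          (mem_insert_iff.mp (hUsub hx)).resolve_left (fun h => heU (h ▸ hx))
        exact absurd (hI U hUI) (not_le.mpr hUlt)
      have hsubI : U \ {e} ⊆ I := fun x hx =>
        (mem_insert_iff.mp (hUsub hx.1)).resolve_left (fun h => hx.2 h)
      have hins : insert e (U \ {e}) = U := by
        rw [insert_diff_singleton, insert_eq_of_mem heU]
      have hcard : U.ncard = (U \ {e}).ncard + 1 := by
        conv_lhs => rw [← hins]
        rw [Set.ncard_insert_of_notMem (fun h => h.2 rfl) (Set.toFinite _)]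
      have hle := hI _ hsubI
      have hmono : (propsOf n Ps (U \ {e})).ncard ≤ (propsOf n Ps U).ncard :=
        WLD.ncard_mono n Ps diff_subset
      refine ⟨U \ {e}, hsubI, by omega, fun _ => ?_⟩
      rw [hins]
      omega
    · exact ⟨∅, empty_subset _, by simp [WLD.propsOf_empty], fun h => absurd h he⟩
  choose U hU1 hU2 hU3 using hU
  -- `T` is the union of the tight sets.
  set T : Set (Fin n) := ⋃ e ∈ J \ I, U e with hTdef
  have hTI : T ⊆ I := by
    intro x hx
    simp only [hTdef, mem_iUnion] at hx
    obtain ⟨e, _, hx⟩ := hx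
    exact hU1 e hx
  -- `T` is tight.
  have hTtight : (propsOf n Ps T).ncard = T.ncard := by
    have key : ∀ D : Set (Fin n), D.Finite → D ⊆ J \ I →
        (propsOf n Ps (⋃ e ∈ D, U e)).ncard = (⋃ e ∈ D, U e).ncard := by
      intro D hDfin
      refine Set.Finite.induction_on D hDfin (fun _ => by simp [WLD.propsOf_empty]) ?_
      intro a s ha hs ih hD
      have hsub : s ⊆ J \ I := (subset_insert a s).trans hD
      have ihs := ih hsub
      have hUa : U a ⊆ I := hU1 a
      have hUs : (⋃ e ∈ s, U e) ⊆ I := by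
        intro x hx
        simp only [mem_iUnion] at hx
        obtain ⟨e, _, hx⟩ := hx
        exact hU1 e hx
      have := WLD.tight_union n Ps hI hUa hUs (hU2 a) ihs
      rw [biUnion_insert]
      exact this
    exact key (J \ I) (Set.toFinite _) Subset.rfl
  -- adding all of `J \ I` to `T` does not increase `|propsOf|`.
  have hTadd : (propsOf n Ps (T ∪ (J \ I))).ncard ≤ (propsOf n Ps T).ncard := by
    have key : ∀ D : Set (Fin n), D.Finite → D ⊆ J \ I →
        (propsOf n Ps (T ∪ D)).ncard ≤ (propsOf n Ps T).ncard := by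
      intro D hDfin
      refine Set.Finite.induction_on D hDfin (fun _ => by simp) ?_
      intro a s ha hs ih hD
      have hsub : s ⊆ J \ I := (subset_insert a s).trans hD
      have haJI : a ∈ J \ I := hD (mem_insert a s)
      have hUaT : U a ⊆ T ∪ s := by
        intro x hx
        exact Or.inl (by
          simp only [hTdef, mem_iUnion]
          exact ⟨a, haJI, hx⟩)
      have hstep := WLD.add_elem n Ps hUaT (hU3 a haJI)
      have : T ∪ insert a s = insert a (T ∪ s) := by
        rw [union_insert]
      rw [this]
      exact hstep.trans (ih hsub)
    exact key (J \ I) (Set.toFinite _) Subset.rfl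
  -- Final counting contradiction.
  set W : Set (Fin n) := T ∪ (J \ I) with hWdef
  have h1 : (J ∩ W).ncard ≤ (propsOf n Ps (J ∩ W)).ncard := hJ _ inter_subset_left
  have h2 : (propsOf n Ps (J ∩ W)).ncard ≤ (propsOf n Ps W).ncard :=
    WLD.ncard_mono n Ps inter_subset_right
  have h3 : (propsOf n Ps W).ncard ≤ T.ncard := le_of_le_of_eq hTadd hTtight
  have hJW : J ∩ W = (J ∩ T) ∪ (J \ I) := by
    rw [hWdef, inter_union_distrib_left]
    congr 1
    ext x; exact ⟨fun h => h.2, fun h => ⟨h.1, h⟩⟩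
  have hdisj : Disjoint (J ∩ T) (J \ I) :=
    Set.disjoint_left.mpr fun x hx hx' => hx'.2 (hTI hx.2)
  have h4 : (J ∩ W).ncard = (J ∩ T).ncard + (J \ I).ncard := by
    rw [hJW, Set.ncard_union_eq hdisj (Set.toFinite _) (Set.toFinite _)]
  have h5 : (T ∩ J).ncard + (T \ J).ncard = T.ncard :=
    Set.ncard_inter_add_ncard_diff_eq_ncard T J (Set.toFinite _)
  have h6 : (T \ J).ncard ≤ (I \ J).ncard :=
    Set.ncard_le_ncard (diff_subset_diff_left hTI) (Set.toFinite _)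
  have h7 : (I ∩ J).ncard + (I \ J).ncard = I.ncard :=
    Set.ncard_inter_add_ncard_diff_eq_ncard I J (Set.toFinite _)
  have h8 : (J ∩ I).ncard + (J \ I).ncard = J.ncard :=
    Set.ncard_inter_add_ncard_diff_eq_ncard J I (Set.toFinite _)
  have h9 : (I ∩ J).ncard = (J ∩ I).ncard := by rw [inter_comm]
  have h10 : (J ∩ T).ncard = (T ∩ J).ncard := by rw [inter_comm]
  omega

/-- Any independent set has cardinality at most `|Ps|`. -/
lemma WLD.ind_card_le {S : Set (Fin n)} (hS : WLD.Ind n Ps S) : S.ncard ≤ Ps.ncard :=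
  (hS S Subset.rfl).trans
    (Set.ncard_le_ncard (WLD.propsOf_subset n Ps S) (Set.toFinite _))

/-- Well-definedness yields an independent set of full size `|Ps|`. -/
lemma WLD.exists_big (hW : WellDefinedWLD n Ps) :
    ∃ S : Set (Fin n), S.ncard = Ps.ncard ∧ WLD.Ind n Ps S := by
  classical
  set t : ↥Ps → Finset (Fin n) := fun p => (Set.toFinite (Vp n p.1)).toFinset with ht
  have hhall : ∀ s : Finset ↥Ps, s.card ≤ (s.biUnion t).card := by
    intro s
    rcases s.eq_empty_or_nonempty with rfl | hne
    · simp
    set P : Set (Fin n × Fin n) := ↑(s.image (Subtype.val)) with hP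
    have hPsub : P ⊆ Ps := by
      intro q hq
      simp only [hP, Finset.coe_image, mem_image, Finset.mem_coe] at hq
      obtain ⟨q', _, rfl⟩ := hq
      exact q'.2
    have hPne : P.Nonempty := by
      obtain ⟨q, hq⟩ := hne
      exact ⟨(q : Fin n × Fin n), Finset.mem_coe.mpr (Finset.mem_image.mpr ⟨q, hq, rfl⟩)⟩
    have hcard : P.ncard = s.card := by
      rw [hP, Set.ncard_coe_finset, Finset.card_image_of_injective _ Subtype.val_injective]
    have hVP : VP n P = ↑(s.biUnion t) := by
      ext x
      simp only [VP, mem_iUnion, Finset.coe_biUnion, Finset.mem_coe, Finset.mem_biUnion,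
        hP, Finset.coe_image, mem_image, exists_prop, ht, Set.Finite.mem_toFinset]
      constructor
      · rintro ⟨q, ⟨q', hq', rfl⟩, hx⟩
        exact ⟨q', hq', hx⟩
      · rintro ⟨q', hq', hx⟩
        exact ⟨q', ⟨q', hq', rfl⟩, hx⟩
    have hWP := hW P hPsub hPne
    rw [hVP] at hWP
    have hcoe := Set.ncard_coe_finset (s.biUnion t)
    omega
  obtain ⟨f, hfinj, hfmem⟩ := (Finset.all_card_le_biUnion_card_iff_exists_injective t).mp hhall
  simp only [ht, Set.Finite.mem_toFinset] at hfmem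
  refine ⟨Set.range f, ?_, ?_⟩
  · rw [← Nat.card_coe_set_eq, Nat.card_range_of_injective hfinj,
      ← Nat.card_coe_set_eq]
  · intro V hV
    have hg : ∀ v : Fin n, ∃ q : Fin n × Fin n, v ∈ V →
        ∃ hq : q ∈ Ps, f ⟨q, hq⟩ = v := by
      intro v
      by_cases hv : v ∈ V
      · obtain ⟨p, hp⟩ := hV hv
        exact ⟨(p : Fin n × Fin n), fun _ => ⟨p.2, by rw [Subtype.coe_eta]; exact hp⟩⟩
      · exact ⟨(0, 0), fun h => absurd h hv⟩
    choose g hg using hg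
    apply Set.ncard_le_ncard_of_injOn g
    · intro v hv
      obtain ⟨hq, hfq⟩ := hg v hv
      refine ⟨hq, v, ?_, hv⟩
      have hm := hfmem ⟨g v, hq⟩
      rw [hfq] at hm
      exact hm
    · intro u hu v hv huv
      obtain ⟨hqu, hfqu⟩ := hg u hu
      obtain ⟨hqv, hfqv⟩ := hg v hv
      have h1 : f ⟨g u, hqu⟩ = f ⟨g v, hqv⟩ := congrArg f (Subtype.ext huv)
      rw [hfqu, hfqv] at h1
      exact h1

end Aux

/-- For a well-defined Wilson loop diagram `W = (Ps, n)` there is a matroid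
on `Fin n` whose independent sets are exactly the `S` with `|U| ≤ |Prop(U)|` for all `U ⊆ S`,
and whose bases are exactly the such sets of size `|Ps|`. -/
theorem wilson_loop_matroid_exists (n : ℕ) [NeZero n] (Ps : Set (Fin n × Fin n))
    (hW : WellDefinedWLD n Ps) :
    ∃ M : Matroid (Fin n), M.E = Set.univ ∧
      (∀ S : Set (Fin n), M.Indep S ↔ ∀ U ⊆ S, U.ncard ≤ (propsOf n Ps U).ncard) ∧
      (∀ B : Set (Fin n),
        M.IsBase B ↔ B.ncard = Ps.ncard ∧ ∀ U ⊆ B, U.ncard ≤ (propsOf n Ps U).ncard) := by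
  classical
  set M : Matroid (Fin n) := (IndepMatroid.ofFinite (Set.finite_univ)
    (WLD.Ind n Ps) (WLD.ind_empty n Ps)
    (fun I J hJ hIJ => WLD.ind_subset n Ps hJ hIJ)
    (fun I J hI hJ hlt => WLD.ind_aug n Ps hI hJ hlt)
    (fun I _ => Set.subset_univ I)).matroid with hM
  have hMInd : ∀ S, M.Indep S ↔ WLD.Ind n Ps S := by
    intro S
    rw [hM, IndepMatroid.matroid_Indep, IndepMatroid.ofFinite_indep]
  refine ⟨M, ?_, ?_, ?_⟩
  · rw [hM, IndepMatroid.matroid_E, IndepMatroid.ofFinite_E]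
  · intro S
    rw [hMInd]
    rfl
  · intro B
    rw [Matroid.isBase_iff_maximal_indep]
    constructor
    · rintro ⟨hBind, hBmax⟩
      rw [hMInd] at hBind
      refine ⟨?_, hBind⟩
      obtain ⟨S, hScard, hSind⟩ := WLD.exists_big n Ps hW
      have hle : B.ncard ≤ Ps.ncard := WLD.ind_card_le n Ps hBind
      by_contra hne
      have hlt : B.ncard < S.ncard := by omega
      obtain ⟨e, heJ, heB, hins⟩ := WLD.ind_aug n Ps hBind hSind hlt
      have hsub : insert e B ⊆ B :=
        hBmax ((hMInd _).mpr hins) (Set.subset_insert e B)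
      exact heB (hsub (Set.mem_insert e B))
    · rintro ⟨hcard, hBind⟩
      refine ⟨(hMInd B).mpr hBind, ?_⟩
      intro I hIind hBI
      rw [hMInd] at hIind
      have hBI' : B = I := Set.eq_of_subset_of_ncard_le hBI
        (by rw [hcard]; exact WLD.ind_card_le n Ps hIind) (Set.toFinite _)
      exact hBI' ▸ Set.Subset.rfl
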